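/- Suppose the function f(z) = (1/m) Σ_j (|a_j*z| − |a_j*x|)² satisfies the restricted strong convexity condition: D_{z−x e^{iφ(z)}} f(z) ≥ γ‖z − x e^{iφ(z)}‖² + f(z) for all z with dist(z,x) ≤ ε‖x‖, where φ(z) := argmin_φ ‖z − x e^{iφ}‖ and dist(z,x) := min_φ ‖z − x e^{iφ}‖. Let z_{k+1} := z_k − (1 − b_{i_k}/|a_{i_k}* z_k|) a_{i_k} a_{i_k}* z_k with b_j := |a_j* x|, ‖a_j‖ = 1 for all j, and i_k chosen uniformly at random from {1,…,m}. Then for any z_k with dist(z_k, x) ≤ ε‖x‖, E_{i_k}[dist²(z_{k+1}, x)] ≤ (1 − γ) dist²(z_k, x). -/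

import Mathlib

open scoped BigOperators

lemma opt_phase_exists (n : ℕ) (z x : EuclideanSpace ℂ (Fin n)) :
    ∃ φ₀ : ℝ, ‖z - Complex.exp (φ₀ * Complex.I) • x‖ =
      ⨅ ψ : ℝ, ‖z - Complex.exp (ψ * Complex.I) • x‖ := by
  set g : ℝ → ℝ := fun φ => ‖z - Complex.exp (φ * Complex.I) • x‖ with hg
  have hcont : Continuous g := by
    apply Continuous.norm
    exact continuous_const.sub ((Complex.continuous_exp.comp
      (Complex.continuous_ofReal.mul continuous_const)).smul continuous_const)
  have hper : Function.Periodic g (2 * Real.pi) := by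
    intro φ
    simp only [hg]
    congr 3
    push_cast
    rw [add_mul, Complex.exp_add, Complex.exp_two_pi_mul_I, mul_one]
  have hne : (Set.Icc (0:ℝ) (2*Real.pi)).Nonempty := ⟨0, by constructor <;> positivity⟩
  obtain ⟨φ₀, -, hmin⟩ := isCompact_Icc.exists_isMinOn hne hcont.continuousOn
  have hall : ∀ φ, g φ₀ ≤ g φ := by
    intro φ
    obtain ⟨ψ, hψ, he⟩ := hper.exists_mem_Ico₀ (by positivity) φ
    rw [he]
    exact hmin ⟨hψ.1, hψ.2.le⟩
  have hbdd : BddBelow (Set.range g) := ⟨0, by rintro y ⟨φ, rfl⟩; exact norm_nonneg _⟩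
  exact ⟨φ₀, le_antisymm (le_ciInf hall) (ciInf_le hbdd φ₀)⟩

theorem stmt_19 (n m : ℕ) (x : EuclideanSpace ℂ (Fin n))
    (a : Fin m → EuclideanSpace ℂ (Fin n)) (ha : ∀ j, ‖a j‖ = 1)
    (γ ε : ℝ) (hγ : 0 < γ) (hε : 0 < ε)
    -- Restricted strong convexity RSC(γ, ε): for every z in the ε‖x‖-neighborhood and
    -- every optimal phase φ, the one-sided directional derivative of f at z in the
    -- direction z - e^{iφ}x dominates γ‖z - e^{iφ}x‖² + f(z).
    (hRSC : ∀ z : EuclideanSpace ℂ (Fin n),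
      (⨅ φ : ℝ, ‖z - Complex.exp (φ * Complex.I) • x‖) ≤ ε * ‖x‖ →
      ∀ φ : ℝ, ‖z - Complex.exp (φ * Complex.I) • x‖ =
          (⨅ ψ : ℝ, ‖z - Complex.exp (ψ * Complex.I) • x‖) →
        (2/(m:ℝ)) * ∑ j, (1 - ‖(inner ℂ (a j) x : ℂ)‖/‖(inner ℂ (a j) z : ℂ)‖) *
            ((inner ℂ (a j) (z - Complex.exp (φ * Complex.I) • x) : ℂ) *
              (inner ℂ z (a j) : ℂ)).re
          ≥ γ * ‖z - Complex.exp (φ * Complex.I) • x‖^2 +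
            (1/(m:ℝ)) * ∑ j, (‖(inner ℂ (a j) z : ℂ)‖ - ‖(inner ℂ (a j) x : ℂ)‖)^2)
    (zk : EuclideanSpace ℂ (Fin n))
    (hzk : (⨅ φ : ℝ, ‖zk - Complex.exp (φ * Complex.I) • x‖) ≤ ε * ‖x‖) :
    -- expected squared distance after one randomized Kaczmarz step (i uniform on {1,…,m})
    (1/(m:ℝ)) * ∑ i : Fin m,
        (⨅ φ : ℝ, ‖(zk - (((1 - ‖(inner ℂ (a i) x : ℂ)‖/‖(inner ℂ (a i) zk : ℂ)‖ : ℝ) : ℂ) *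
            (inner ℂ (a i) zk : ℂ)) • a i) - Complex.exp (φ * Complex.I) • x‖)^2
      ≤ (1 - γ) * (⨅ φ : ℝ, ‖zk - Complex.exp (φ * Complex.I) • x‖)^2 := by
  obtain ⟨φ₀, hφ₀⟩ := opt_phase_exists n zk x
  have hRSC' := hRSC zk hzk φ₀ hφ₀
  set h : EuclideanSpace ℂ (Fin n) := zk - Complex.exp (φ₀ * Complex.I) • x with hh
  -- per-index bound
  have key : ∀ i : Fin m,
      (⨅ φ : ℝ, ‖(zk - (((1 - ‖(inner ℂ (a i) x : ℂ)‖/‖(inner ℂ (a i) zk : ℂ)‖ : ℝ) : ℂ) *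
          (inner ℂ (a i) zk : ℂ)) • a i) - Complex.exp (φ * Complex.I) • x‖)^2
      ≤ ‖h‖^2 - 2 * ((1 - ‖(inner ℂ (a i) x : ℂ)‖/‖(inner ℂ (a i) zk : ℂ)‖) *
            ((inner ℂ (a i) h : ℂ) * (inner ℂ zk (a i) : ℂ)).re)
        + (‖(inner ℂ (a i) zk : ℂ)‖ - ‖(inner ℂ (a i) x : ℂ)‖)^2 := by
    intro i
    set u : ℂ := inner ℂ (a i) zk with hu
    set b : ℝ := ‖(inner ℂ (a i) x : ℂ)‖ with hb
    set r : ℝ := ‖u‖ with hr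
    set t : ℝ := 1 - b / r with ht
    set c : ℂ := (t : ℂ) * u with hc
    have hinf_nonneg : (0:ℝ) ≤ ⨅ φ : ℝ, ‖(zk - c • a i) - Complex.exp (φ * Complex.I) • x‖ :=
      le_ciInf fun φ => norm_nonneg _
    have hinf_le : (⨅ φ : ℝ, ‖(zk - c • a i) - Complex.exp (φ * Complex.I) • x‖)
        ≤ ‖(zk - c • a i) - Complex.exp (φ₀ * Complex.I) • x‖ :=
      ciInf_le ⟨0, by rintro y ⟨φ, rfl⟩; exact norm_nonneg _⟩ φ₀
    have hrw : (zk - c • a i) - Complex.exp (φ₀ * Complex.I) • x = h - c • a i := by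
      rw [hh]; abel
    have hre : (inner ℂ h (c • a i) : ℂ).re
        = t * ((inner ℂ (a i) h : ℂ) * (inner ℂ zk (a i) : ℂ)).re := by
      have h1 : (inner ℂ h (c • a i) : ℂ) = (t : ℂ) * (u * (inner ℂ h (a i) : ℂ)) := by
        rw [inner_smul_right]; ring
      have h2 : ((inner ℂ (a i) h : ℂ) * (inner ℂ zk (a i) : ℂ))
          = starRingEnd ℂ (u * (inner ℂ h (a i) : ℂ)) := by
        rw [map_mul, ← inner_conj_symm, ← inner_conj_symm zk (a i)]
        simp [hu]
        ring
      rw [h1, h2, Complex.conj_re, Complex.re_ofReal_mul]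
    have hsq : ‖h - c • a i‖^2
        = ‖h‖^2 - 2 * (t * ((inner ℂ (a i) h : ℂ) * (inner ℂ zk (a i) : ℂ)).re) + ‖c‖^2 := by
      rw [norm_sub_sq (𝕜 := ℂ), norm_smul, ha i, mul_one]
      simp only [RCLike.re_to_complex]
      rw [hre]
    have hcle : ‖c‖^2 ≤ (r - b)^2 := by
      rcases eq_or_ne r 0 with h0 | h0
      · have hu0 : u = 0 := norm_eq_zero.mp (hr ▸ h0)
        rw [hc, hu0, mul_zero, norm_zero]
        nlinarith [sq_nonneg (r - b)]
      · have hr0 : 0 < r := lt_of_le_of_ne (norm_nonneg _) (Ne.symm h0)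
        have htr : t * r = r - b := by
          rw [ht]
          field_simp
        have hnc : ‖c‖ = |r - b| := by
          calc ‖c‖ = |t| * r := by rw [hc, norm_mul, Complex.norm_real, Real.norm_eq_abs, ← hr]
            _ = |t| * |r| := by rw [abs_of_pos hr0]
            _ = |t * r| := (abs_mul t r).symm
            _ = |r - b| := by rw [htr]
        rw [hnc, sq_abs]
    calc (⨅ φ : ℝ, ‖(zk - c • a i) - Complex.exp (φ * Complex.I) • x‖)^2
        ≤ ‖h - c • a i‖^2 := by
          rw [← hrw]
          exact pow_le_pow_left₀ hinf_nonneg hinf_le 2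
      _ = ‖h‖^2 - 2 * (t * ((inner ℂ (a i) h : ℂ) * (inner ℂ zk (a i) : ℂ)).re) + ‖c‖^2 := hsq
      _ ≤ _ := by linarith
  -- combine
  rw [← hφ₀]
  rcases Nat.eq_zero_or_pos m with hm | hm
  · subst hm
    simp only [Nat.cast_zero, Finset.univ_eq_empty, Finset.sum_empty, mul_zero] at hRSC' ⊢
    have hh2 : ‖h‖^2 ≤ 0 := by
      rw [ge_iff_le] at hRSC'
      simp only [div_zero, zero_mul, add_zero, zero_add] at hRSC'
      nlinarith
    nlinarith [sq_nonneg ‖h‖]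
  have hm' : (0:ℝ) < m := by exact_mod_cast hm
  have hmne : (m:ℝ) ≠ 0 := ne_of_gt hm'
  set S : ℝ := ∑ j, (1 - ‖(inner ℂ (a j) x : ℂ)‖/‖(inner ℂ (a j) zk : ℂ)‖) *
      ((inner ℂ (a j) h : ℂ) * (inner ℂ zk (a j) : ℂ)).re with hS
  set F : ℝ := ∑ j, (‖(inner ℂ (a j) zk : ℂ)‖ - ‖(inner ℂ (a j) x : ℂ)‖)^2 with hF
  have hsum : ∑ i : Fin m,
      (⨅ φ : ℝ, ‖(zk - (((1 - ‖(inner ℂ (a i) x : ℂ)‖/‖(inner ℂ (a i) zk : ℂ)‖ : ℝ) : ℂ) *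
          (inner ℂ (a i) zk : ℂ)) • a i) - Complex.exp (φ * Complex.I) • x‖)^2
      ≤ (m:ℝ) * ‖h‖^2 - 2 * S + F := by
    calc _ ≤ ∑ i : Fin m, (‖h‖^2 - 2 * ((1 - ‖(inner ℂ (a i) x : ℂ)‖/‖(inner ℂ (a i) zk : ℂ)‖) *
            ((inner ℂ (a i) h : ℂ) * (inner ℂ zk (a i) : ℂ)).re)
          + (‖(inner ℂ (a i) zk : ℂ)‖ - ‖(inner ℂ (a i) x : ℂ)‖)^2) :=
        Finset.sum_le_sum fun i _ => key i
      _ = (m:ℝ) * ‖h‖^2 - 2 * S + F := by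
        rw [hS, hF, Finset.sum_add_distrib, Finset.sum_sub_distrib, Finset.sum_const,
          Finset.card_univ, Fintype.card_fin, ← Finset.mul_sum]
        push_cast
        ring
  have hgoal : (1/(m:ℝ)) * ((m:ℝ) * ‖h‖^2 - 2 * S + F)
      = ‖h‖^2 - (2/(m:ℝ)) * S + (1/(m:ℝ)) * F := by
    field_simp
  rw [ge_iff_le, hS] at hRSC'
  calc (1/(m:ℝ)) * ∑ i : Fin m,
        (⨅ φ : ℝ, ‖(zk - (((1 - ‖(inner ℂ (a i) x : ℂ)‖/‖(inner ℂ (a i) zk : ℂ)‖ : ℝ) : ℂ) *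
            (inner ℂ (a i) zk : ℂ)) • a i) - Complex.exp (φ * Complex.I) • x‖)^2
      ≤ (1/(m:ℝ)) * ((m:ℝ) * ‖h‖^2 - 2 * S + F) := by
        apply mul_le_mul_of_nonneg_left hsum (by positivity)
    _ ≤ (1 - γ) * ‖h‖^2 := by
        rw [hgoal]
        linarith
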